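/- Let F be a field of characteristic 0. Then for every polynomial P ∈ F[x_1,…,x_n] one has dim(rad(P)) + dim(L_P) = n. -/
import Mathlib


open scoped Classical

noncomputable section

/-- The radical of a function `f : V → F`, as a linear subspace of `V`. -/
def funRadical {F V : Type*} [Field F] [AddCommGroup V] [Module F V]
    (f : V → F) : Submodule F V where
  carrier := {w | ∀ (v : V) (lam : F), f (v + lam • w) = f v}
  zero_mem' := by intro v lam; simp
  add_mem' := by
    intro a b ha hb v lam
    have h1 : v + lam • (a + b) = (v + lam • a) + lam • b := by
      rw [smul_add]; abel
    rw [h1, hb (v + lam • a) lam, ha v lam]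
  smul_mem' := by
    intro c a ha v lam
    have h1 : v + lam • (c • a) = v + (lam * c) • a := by rw [smul_smul]
    rw [h1, ha v (lam * c)]

/-- The directional derivative of a multivariate polynomial `P` along `v` at `a`:
the coefficient of `t` in the univariate polynomial `P (a + t • v)`. -/
def dirDeriv {F : Type*} [Field F] {n : ℕ}
    (P : MvPolynomial (Fin n) F) (a v : Fin n → F) : F :=
  ((MvPolynomial.aeval
    (fun i => Polynomial.C (a i) + Polynomial.C (v i) * Polynomial.X)) P).coeff 1

/-- The space `L_P`: the span of the functionals `v ↦ ∂P/∂v(a)` over all `a ∈ F^n`. -/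
def polyLP {F : Type*} [Field F] {n : ℕ} (P : MvPolynomial (Fin n) F) :
    Submodule F ((Fin n → F) → F) :=
  Submodule.span F (Set.range fun a : Fin n → F => fun v => dirDeriv P a v)


section Aux

open Polynomial MvPolynomial

variable {F : Type*} [Field F] {n : ℕ}

lemma aux_eval_dirPoly (P : MvPolynomial (Fin n) F) (a w : Fin n → F) (t : F) :
    Polynomial.eval t ((MvPolynomial.aeval
      (fun i => Polynomial.C (a i) + Polynomial.C (w i) * Polynomial.X)) P)
      = MvPolynomial.eval (a + t • w) P := by
  have h := MvPolynomial.comp_aeval_apply (Polynomial.aeval t : F[X] →ₐ[F] F)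
    (f := fun i => Polynomial.C (a i) + Polynomial.C (w i) * Polynomial.X) P
  simp only [Polynomial.coe_aeval_eq_eval] at h
  rw [h]
  have hfun : (fun i => Polynomial.eval t (Polynomial.C (a i) + Polynomial.C (w i) * Polynomial.X))
      = (a + t • w) := by
    funext i
    simp only [Polynomial.eval_add, Polynomial.eval_mul, Polynomial.eval_C, Polynomial.eval_X,
      Pi.add_apply, Pi.smul_apply, smul_eq_mul]
    ring
  rw [hfun]
  rfl

lemma aux_taylor_dirPoly (P : MvPolynomial (Fin n) F) (a w : Fin n → F) (t : F) :
    Polynomial.taylor t ((MvPolynomial.aeval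
      (fun i => Polynomial.C (a i) + Polynomial.C (w i) * Polynomial.X)) P)
      = (MvPolynomial.aeval
      (fun i => Polynomial.C (a i + t * w i) + Polynomial.C (w i) * Polynomial.X)) P := by
  have key : ∀ q : F[X], Polynomial.taylor t q
      = Polynomial.aeval (Polynomial.X + Polynomial.C t : F[X]) q := by
    intro q
    rw [Polynomial.taylor_apply, Polynomial.aeval_def, Polynomial.comp, Polynomial.algebraMap_eq]
  rw [key]
  have h := MvPolynomial.comp_aeval_apply
    (Polynomial.aeval (Polynomial.X + Polynomial.C t : F[X]) : F[X] →ₐ[F] F[X])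
    (f := fun i => Polynomial.C (a i) + Polynomial.C (w i) * Polynomial.X) P
  rw [h]
  have hfun : (fun i => (Polynomial.aeval (Polynomial.X + Polynomial.C t : F[X]))
        (Polynomial.C (a i) + Polynomial.C (w i) * Polynomial.X))
      = fun i => Polynomial.C (a i + t * w i) + Polynomial.C (w i) * Polynomial.X := by
    funext i
    simp [mul_add, map_add, map_mul]
    ring
  rw [hfun]

lemma aux_dirDeriv_eq_sum (P : MvPolynomial (Fin n) F) (a v : Fin n → F) :
    dirDeriv P a v = ∑ i, v i * MvPolynomial.eval a (MvPolynomial.pderiv i P) := by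
  induction P using MvPolynomial.induction_on with
  | C c => simp [dirDeriv]
  | add p q hp hq =>
      simp only [dirDeriv, map_add, Polynomial.coeff_add] at *
      simp [hp, hq, mul_add, Finset.sum_add_distrib]
  | mul_X p j hp =>
      set Q := (MvPolynomial.aeval
        (fun i => Polynomial.C (a i) + Polynomial.C (v i) * Polynomial.X)) p with hQ
      have hc0 : Q.coeff 0 = MvPolynomial.eval a p := by
        rw [hQ, Polynomial.coeff_zero_eq_eval_zero, aux_eval_dirPoly]
        simp
      have hL : dirDeriv (p * MvPolynomial.X j) a v
          = Q.coeff 1 * a j + Q.coeff 0 * v j := by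
        rw [dirDeriv, map_mul, MvPolynomial.aeval_X, ← hQ, mul_add, Polynomial.coeff_add,
          Polynomial.coeff_mul_C, ← mul_assoc]
        congr 1
        rw [show (1 : ℕ) = 0 + 1 from rfl, Polynomial.coeff_mul_X, Polynomial.coeff_mul_C]
      rw [hL, hc0]
      rw [show Q.coeff 1 = dirDeriv p a v from rfl, hp]
      simp only [MvPolynomial.pderiv_mul, MvPolynomial.pderiv_X, map_add, map_mul,
        MvPolynomial.eval_X, Pi.single_apply, apply_ite (MvPolynomial.eval a), map_one, map_zero]
      rw [Finset.sum_congr rfl (fun i _ => mul_add (v i) _ _), Finset.sum_add_distrib]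
      simp only [mul_ite, mul_one, mul_zero, Finset.sum_ite_eq, Finset.mem_univ, if_true]
      rw [Finset.sum_mul]
      congr 1
      · exact Finset.sum_congr rfl fun i _ => by ring
      · ring

/-- The functional `l_{P,a}` as a genuine element of the dual space. -/
def auxLA (P : MvPolynomial (Fin n) F) (a : Fin n → F) : Module.Dual F (Fin n → F) :=
  ∑ i, MvPolynomial.eval a (MvPolynomial.pderiv i P) • LinearMap.proj i

lemma auxLA_apply (P : MvPolynomial (Fin n) F) (a v : Fin n → F) :
    auxLA P a v = dirDeriv P a v := by
  rw [aux_dirDeriv_eq_sum]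
  simp [auxLA, mul_comm]

/-- The coercion from the dual space into the space of all functions, as a linear map. -/
def auxCoe : Module.Dual F (Fin n → F) →ₗ[F] ((Fin n → F) → F) where
  toFun f := ⇑f
  map_add' _ _ := rfl
  map_smul' _ _ := rfl

lemma auxCoe_inj : Function.Injective (auxCoe (F := F) (n := n)) :=
  fun f g h => LinearMap.ext fun v => congrFun h v

lemma aux_polyLP_eq (P : MvPolynomial (Fin n) F) :
    polyLP P = (Submodule.span F (Set.range (auxLA P))).map auxCoe := by
  have hr : (Set.range fun a : Fin n → F => fun v => dirDeriv P a v)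
      = ⇑(auxCoe (F := F) (n := n)) '' Set.range (auxLA P) := by
    rw [← Set.range_comp]
    apply congrArg
    funext a
    funext v
    exact (auxLA_apply P a v).symm
  rw [polyLP, hr, ← Submodule.map_span]

lemma aux_radical_eq [CharZero F] (P : MvPolynomial (Fin n) F) :
    funRadical (fun x : Fin n → F => MvPolynomial.eval x P)
      = (Submodule.span F (Set.range (auxLA P))).dualCoannihilator := by
  ext w
  rw [Submodule.mem_dualCoannihilator]
  constructor
  · intro hw φ hφ
    induction hφ using Submodule.span_induction with
    | mem x hx =>
        obtain ⟨a, rfl⟩ := hx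
        rw [auxLA_apply]
        have hQ : ((MvPolynomial.aeval
            fun i => Polynomial.C (a i) + Polynomial.C (w i) * Polynomial.X) P)
            = Polynomial.C (MvPolynomial.eval a P) := by
          apply Polynomial.funext
          intro t
          rw [aux_eval_dirPoly, Polynomial.eval_C]
          exact hw a t
        rw [dirDeriv, hQ, Polynomial.coeff_C]
        simp
    | zero => simp
    | add x y _ _ hx hy => simp [hx, hy]
    | smul c x _ hx => simp [hx]
  · intro h v lam
    have hall : ∀ a : Fin n → F, dirDeriv P a w = 0 := fun a =>
      (auxLA_apply P a w) ▸ h _ (Submodule.subset_span ⟨a, rfl⟩)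
    set Q := (MvPolynomial.aeval
      fun i => Polynomial.C (v i) + Polynomial.C (w i) * Polynomial.X) P with hQdef
    have hder : Polynomial.derivative Q = 0 := by
      apply Polynomial.funext
      intro t
      rw [Polynomial.eval_zero, ← Polynomial.taylor_coeff_one, hQdef, aux_taylor_dirPoly]
      have hfun : (fun i => Polynomial.C (v i + t * w i) + Polynomial.C (w i) * Polynomial.X)
          = fun i => Polynomial.C ((v + t • w) i) + Polynomial.C (w i) * Polynomial.X := by
        funext i; simp
      rw [hfun]
      exact hall (v + t • w)
    have hc : Q = Polynomial.C (Q.coeff 0) := Polynomial.eq_C_of_derivative_eq_zero hder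
    have h1 : MvPolynomial.eval (v + lam • w) P = Q.coeff 0 := by
      rw [← aux_eval_dirPoly P v w lam, ← hQdef, hc]; simp
    have h2 : MvPolynomial.eval v P = Q.coeff 0 := by
      have h0 : v = v + (0 : F) • w := by simp
      rw [h0, ← aux_eval_dirPoly P v w 0, ← hQdef, hc]; simp
    show MvPolynomial.eval (v + lam • w) P = MvPolynomial.eval v P
    rw [h1, h2]

end Aux

theorem stmt_7 {F : Type*} [Field F] [CharZero F] {n : ℕ}
    (P : MvPolynomial (Fin n) F) :
    Module.rank F ↥(funRadical (fun x : Fin n → F => MvPolynomial.eval x P))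
      + Module.rank F ↥(polyLP P) = (n : Cardinal) := by
  rw [aux_radical_eq, aux_polyLP_eq]
  set D := Submodule.span F (Set.range (auxLA P)) with hD
  have e : D ≃ₗ[F] ↥(D.map (auxCoe (F := F) (n := n))) :=
    Submodule.equivMapOfInjective (σ₁₂ := RingHom.id F) auxCoe auxCoe_inj D
  have he : Module.rank F ↥(D.map (auxCoe (F := F) (n := n))) = Module.rank F ↥D :=
    LinearEquiv.rank_eq (R := F) (M := ↥(D.map (auxCoe (F := F) (n := n)))) (M₁ := ↥D) e.symm
  rw [he]
  haveI : FiniteDimensional F ↥D := inferInstance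
  haveI : FiniteDimensional F ↥D.dualCoannihilator := inferInstance
  have h1 := Module.finrank_eq_rank F ↥D
  have h2 := Module.finrank_eq_rank F ↥D.dualCoannihilator
  rw [← h1, ← h2, ← Nat.cast_add]
  have hfin := Subspace.finrank_add_finrank_dualCoannihilator_eq D
  rw [Module.finrank_fin_fun] at hfin
  rw [add_comm, hfin]

end
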